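/- Let y : (0,∞) → [0,∞) be absolutely continuous, and suppose y'(t) + α(t)y(t) ≤ β(t) a.e., where α(t) = K − φ(t) with K > 0 constant and φ ≥ 0 locally integrable satisfying limsup_{t→∞}(1/T)∫_t^{t+T}φ(τ)dτ < K for some fixed T > 0, and β ≥ 0 locally integrable with lim_{t→∞}(1/T)∫_t^{t+T}β(τ)dτ = 0. Then lim_{t→∞} y(t) = 0. -/

import Mathlib

open MeasureTheory Filter

set_option maxHeartbeats 1000000

open Set intervalIntegral

lemma my_swap {a b : ℝ} (hab : a ≤ b) {f g : ℝ → ℝ}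
    (hf : IntegrableOn f (Set.Icc a b)) (hg : IntegrableOn g (Set.Icc a b)) :
    ∫ τ in a..b, (∫ x in a..τ, f x) * g τ = ∫ x in a..b, f x * ∫ τ in x..b, g τ := by
  set μ := volume.restrict (Icc a b) with hμ
  set s : Set (ℝ × ℝ) := {p : ℝ × ℝ | p.1 ≤ p.2} with hs
  have hsm : MeasurableSet s := (isClosed_le continuous_fst continuous_snd).measurableSet
  have hprod : Integrable (fun p : ℝ × ℝ => f p.1 * g p.2) (μ.prod μ) := hf.mul_prod hg
  have hind : Integrable (Function.uncurry (fun x τ : ℝ => s.indicator (fun p : ℝ × ℝ => f p.1 * g p.2) (x, τ))) (μ.prod μ) := by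
    have : Function.uncurry (fun x τ : ℝ => s.indicator (fun p : ℝ × ℝ => f p.1 * g p.2) (x, τ))
        = s.indicator (fun p : ℝ × ℝ => f p.1 * g p.2) := by
      ext p; cases p; rfl
    rw [this]
    exact hprod.indicator hsm
  have swap := MeasureTheory.integral_integral_swap hind
  -- LHS of swap: ∫ x, ∫ τ, ind (x,τ) ∂μ ∂μ
  have hleft : (∫ x, ∫ τ, s.indicator (fun p : ℝ × ℝ => f p.1 * g p.2) (x, τ) ∂μ ∂μ)
      = ∫ x in a..b, f x * ∫ τ in x..b, g τ := by
    rw [intervalIntegral.integral_of_le hab, ← integral_Icc_eq_integral_Ioc]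
    apply setIntegral_congr_fun measurableSet_Icc
    intro x hx
    have h1 : (fun τ => s.indicator (fun p : ℝ × ℝ => f p.1 * g p.2) (x, τ))
        = (Ici x).indicator (fun τ => f x * g τ) := by
      ext τ
      by_cases h : x ≤ τ
      · simp [hs, Set.indicator_of_mem, h, Set.mem_Ici.mpr h]
      · simp [hs, Set.indicator_of_notMem, h]
    dsimp only
    rw [h1, MeasureTheory.integral_indicator measurableSet_Ici, hμ, Measure.restrict_restrict measurableSet_Ici]
    have h2 : Ici x ∩ Icc a b = Icc x b := by
      ext τ; simp only [mem_inter_iff, mem_Ici, mem_Icc]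
      constructor
      · rintro ⟨h1', h2', h3'⟩; exact ⟨h1', h3'⟩
      · rintro ⟨h1', h2'⟩; exact ⟨h1', hx.1.trans h1', h2'⟩
    rw [h2, integral_Icc_eq_integral_Ioc, ← intervalIntegral.integral_of_le hx.2,
      intervalIntegral.integral_const_mul]
  have hright : (∫ τ, ∫ x, s.indicator (fun p : ℝ × ℝ => f p.1 * g p.2) (x, τ) ∂μ ∂μ)
      = ∫ τ in a..b, (∫ x in a..τ, f x) * g τ := by
    rw [intervalIntegral.integral_of_le hab, ← integral_Icc_eq_integral_Ioc]
    apply setIntegral_congr_fun measurableSet_Icc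
    intro τ hτ
    have h1 : (fun x => s.indicator (fun p : ℝ × ℝ => f p.1 * g p.2) (x, τ))
        = (Iic τ).indicator (fun x => f x * g τ) := by
      ext x
      by_cases h : x ≤ τ
      · simp [hs, Set.indicator_of_mem, h, Set.mem_Iic.mpr h]
      · simp [hs, Set.indicator_of_notMem, h]
    dsimp only
    rw [h1, MeasureTheory.integral_indicator measurableSet_Iic, hμ, Measure.restrict_restrict measurableSet_Iic]
    have h2 : Iic τ ∩ Icc a b = Icc a τ := by
      ext x; simp only [mem_inter_iff, mem_Iic, mem_Icc]
      constructor
      · rintro ⟨h1', h2', h3'⟩; exact ⟨h2', h1'⟩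
      · rintro ⟨h1', h2'⟩; exact ⟨h2', h1', h2'.trans hτ.2⟩
    rw [h2, integral_Icc_eq_integral_Ioc, ← intervalIntegral.integral_of_le hτ.1,
      intervalIntegral.integral_mul_const]
  rw [← hleft, ← hright, swap]

lemma my_prod_rule {a b K : ℝ} (hab : a ≤ b) {y y' : ℝ → ℝ}
    (hy' : IntervalIntegrable y' volume a b)
    (hcont : ContinuousOn y (Set.Icc a b))
    (hy : ∀ t ∈ Set.Icc a b, y t - y a = ∫ τ in a..t, y' τ) :
    y b * Real.exp (K * b) - y a * Real.exp (K * a)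
      = ∫ τ in a..b, (y' τ + K * y τ) * Real.exp (K * τ) := by
  set E : ℝ → ℝ := fun τ => Real.exp (K * τ) with hE
  have hEd : ∀ τ : ℝ, HasDerivAt E (K * E τ) τ := by
    intro τ
    simpa [hE, mul_comm, Function.comp_def] using (Real.hasDerivAt_exp (K * τ)).comp τ ((hasDerivAt_id τ).const_mul K)
  have hEc : Continuous E := Real.continuous_exp.comp (continuous_const.mul continuous_id)
  have hftc : ∀ x : ℝ, ∫ τ in x..b, K * E τ = E b - E x := by
    intro x
    exact intervalIntegral.integral_eq_sub_of_hasDerivAt (fun τ _ => hEd τ)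
      ((continuous_const.mul hEc).intervalIntegrable x b)
  have huIcc : Set.uIcc a b = Set.Icc a b := Set.uIcc_of_le hab
  -- integrability
  have hy'E : IntervalIntegrable (fun τ => y' τ * E τ) volume a b :=
    hy'.mul_continuousOn (by rw [huIcc]; exact hEc.continuousOn)
  have hyE : IntervalIntegrable (fun τ => K * y τ * E τ) volume a b := by
    apply ContinuousOn.intervalIntegrable
    rw [huIcc]
    exact (continuousOn_const.mul hcont).mul hEc.continuousOn
  have hsplit : ∫ τ in a..b, (y' τ + K * y τ) * E τ
      = (∫ τ in a..b, y' τ * E τ) + ∫ τ in a..b, K * y τ * E τ := by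
    rw [← intervalIntegral.integral_add hy'E hyE]
    congr 1; ext τ; ring
  have hmid : ∫ τ in a..b, K * y τ * E τ
      = y a * (E b - E a) + ∫ x in a..b, y' x * (E b - E x) := by
    have h1 : ∫ τ in a..b, K * y τ * E τ
        = ∫ τ in a..b, (y a + ∫ x in a..τ, y' x) * (K * E τ) := by
      apply intervalIntegral.integral_congr
      intro τ hτ
      rw [huIcc] at hτ
      have := hy τ hτ
      have hyτ : y τ = y a + ∫ x in a..τ, y' x := by linarith
      dsimp only
      rw [hyτ]; ring
    have h2 : ∫ τ in a..b, (y a + ∫ x in a..τ, y' x) * (K * E τ)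
        = (∫ τ in a..b, y a * (K * E τ)) + ∫ τ in a..b, (∫ x in a..τ, y' x) * (K * E τ) := by
      rw [← intervalIntegral.integral_add]
      · congr 1; ext τ; ring
      · exact ContinuousOn.intervalIntegrable (by rw [huIcc]; exact continuousOn_const.mul (continuous_const.mul hEc).continuousOn)
      · apply ContinuousOn.intervalIntegrable
        rw [huIcc]
        apply ContinuousOn.mul
        · have hint : IntegrableOn y' (Set.uIcc a b) volume := by
            rw [huIcc]; exact (intervalIntegrable_iff_integrableOn_Icc_of_le hab).mp hy'
          have := intervalIntegral.continuousOn_primitive_interval hint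
          rwa [huIcc] at this
        · exact (continuous_const.mul hEc).continuousOn
    have h3 : ∫ τ in a..b, y a * (K * E τ) = y a * (E b - E a) := by
      rw [intervalIntegral.integral_const_mul, hftc a]
    have h4 : ∫ τ in a..b, (∫ x in a..τ, y' x) * (K * E τ)
        = ∫ x in a..b, y' x * ∫ τ in x..b, K * E τ := by
      apply my_swap hab
      · exact (intervalIntegrable_iff_integrableOn_Icc_of_le hab).mp hy'
      · exact ((continuous_const.mul hEc).continuousOn).integrableOn_Icc
    have h5 : ∫ x in a..b, y' x * ∫ τ in x..b, K * E τ = ∫ x in a..b, y' x * (E b - E x) := by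
      apply intervalIntegral.integral_congr
      intro x _
      dsimp only
      rw [hftc x]
    rw [h1, h2, h3, h4, h5]
  have hy'int : ∫ x in a..b, y' x = y b - y a := (hy b ⟨hab, le_refl b⟩).symm
  have h6 : ∫ x in a..b, y' x * (E b - E x) = (y b - y a) * E b - ∫ x in a..b, y' x * E x := by
    have : ∀ x, y' x * (E b - E x) = y' x * E b - y' x * E x := by intro x; ring
    simp_rw [this]
    rw [intervalIntegral.integral_sub (hy'.mul_const _) hy'E, intervalIntegral.integral_mul_const, hy'int]
  rw [hsplit, hmid, h6]
  ring

lemma my_gronwall {a b c lam : ℝ} (hab : a ≤ b) (hc : 0 ≤ c) (hlam : 1 < lam)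
    {φ z : ℝ → ℝ} (hφ0 : ∀ t, 0 ≤ φ t)
    (hφ : IntegrableOn φ (Set.Icc a b)) (hz : ContinuousOn z (Set.Icc a b))
    (hz0 : ∀ r ∈ Set.Icc a b, 0 ≤ z r)
    (h : ∀ r ∈ Set.Icc a b, z r ≤ c + ∫ τ in a..r, φ τ * z τ) :
    z b ≤ c * Real.exp (lam * ∫ τ in a..b, φ τ) := by
  have hlam0 : 0 < lam := lt_trans one_pos hlam
  have hφz : IntegrableOn (fun τ => φ τ * z τ) (Set.Icc a b) volume :=
    hφ.mul_continuousOn hz isCompact_Icc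
  -- interval integrability on subintervals
  have hφI : ∀ u v, a ≤ u → u ≤ v → v ≤ b → IntervalIntegrable φ volume u v := fun u v h1 h2 h3 =>
    (intervalIntegrable_iff_integrableOn_Icc_of_le h2).mpr (hφ.mono_set (Set.Icc_subset_Icc h1 h3))
  have hφzI : ∀ u v, a ≤ u → u ≤ v → v ≤ b → IntervalIntegrable (fun τ => φ τ * z τ) volume u v :=
    fun u v h1 h2 h3 =>
    (intervalIntegrable_iff_integrableOn_Icc_of_le h2).mpr (hφz.mono_set (Set.Icc_subset_Icc h1 h3))
  set Φ : ℝ → ℝ := fun r => ∫ τ in a..r, φ τ with hΦdef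
  set R : ℝ → ℝ := fun r => c + ∫ τ in a..r, φ τ * z τ with hRdef
  have hΦc : ContinuousOn Φ (Set.Icc a b) := by
    have hint : IntegrableOn φ (Set.uIcc a b) volume := by rwa [Set.uIcc_of_le hab]
    have := intervalIntegral.continuousOn_primitive_interval hint
    rwa [Set.uIcc_of_le hab] at this
  have hΦa : Φ a = 0 := by simp [hΦdef]
  have hRmono : ∀ u v, a ≤ u → u ≤ v → v ≤ b → R u ≤ R v := by
    intro u v h1 h2 h3
    have hsplit : (∫ τ in a..u, φ τ * z τ) + ∫ τ in u..v, φ τ * z τ = ∫ τ in a..v, φ τ * z τ :=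
      intervalIntegral.integral_add_adjacent_intervals
        (hφzI a u le_rfl h1 (h2.trans h3))
        (hφzI u v h1 h2 h3)
    have hpos : 0 ≤ ∫ τ in u..v, φ τ * z τ := by
      apply intervalIntegral.integral_nonneg h2
      intro τ hτ
      exact mul_nonneg (hφ0 τ) (hz0 τ ⟨h1.trans hτ.1, hτ.2.trans h3⟩)
    simp only [hRdef]
    linarith
  have hRc : ∀ r, a ≤ r → r ≤ b → c ≤ R r := by
    intro r h1 h2
    have := hRmono a r le_rfl h1 h2
    simpa [hRdef] using this
  -- trivial case a = b
  rcases eq_or_lt_of_le hab with heq | hlt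
  · subst heq
    have hzb := h a ⟨le_rfl, le_rfl⟩
    have : Φ a = 0 := hΦa
    simp only [hΦdef] at this
    have h1 : (1:ℝ) ≤ Real.exp (lam * ∫ τ in a..a, φ τ) := by
      simp
    calc z a ≤ c + ∫ τ in a..a, φ τ * z τ := hzb
    _ = c := by simp
    _ ≤ c * Real.exp (lam * ∫ τ in a..a, φ τ) := le_mul_of_one_le_right hc h1
  -- uniform continuity of Φ
  set η : ℝ := 1 - 1/lam with hηdef
  have hη0 : 0 < η := by
    have : 1/lam < 1 := by rw [div_lt_one hlam0]; exact hlam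
    simp only [hηdef]; linarith
  have hη1 : η < 1 := by
    have : 0 < 1/lam := by positivity
    simp only [hηdef]; linarith
  obtain ⟨δ, hδ0, hδ⟩ := Metric.uniformContinuousOn_iff.mp
    (isCompact_Icc.uniformContinuousOn_of_continuous hΦc) η hη0
  set n : ℕ := ⌈(b - a)/δ⌉₊ + 1 with hndef
  have hn0 : 0 < (n:ℝ) := by positivity
  have hmesh : (b - a)/n < δ := by
    rw [div_lt_iff₀ hn0]
    have h1 : (b - a)/δ ≤ (⌈(b - a)/δ⌉₊ : ℝ) := Nat.le_ceil _
    have h2 : (b - a) ≤ δ * ⌈(b - a)/δ⌉₊ := by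
      rw [← div_le_iff₀' hδ0] ; exact h1
    have : (n:ℝ) = (⌈(b - a)/δ⌉₊ : ℝ) + 1 := by simp [hndef]
    rw [this]; nlinarith
  have hmesh0 : 0 ≤ (b - a)/n := div_nonneg (by linarith) hn0.le
  set r : ℕ → ℝ := fun i => a + i * ((b - a)/n) with hrdef
  have hr0 : r 0 = a := by simp [hrdef]
  have hrn : r n = b := by
    simp only [hrdef]
    field_simp
    ring
  have hrmono : ∀ i j : ℕ, i ≤ j → r i ≤ r j := by
    intro i j hij
    simp only [hrdef]
    have : (i:ℝ) ≤ j := Nat.cast_le.mpr hij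
    nlinarith
  have hrmem : ∀ i : ℕ, i ≤ n → r i ∈ Set.Icc a b := by
    intro i hi
    constructor
    · simp only [hrdef]
      have : 0 ≤ (i:ℝ) * ((b - a)/n) := mul_nonneg (Nat.cast_nonneg i) hmesh0
      linarith
    · calc r i ≤ r n := hrmono i n hi
      _ = b := hrn
  have key : ∀ i : ℕ, i ≤ n → R (r i) ≤ c * Real.exp (lam * Φ (r i)) := by
    intro i
    induction i with
    | zero =>
      intro _
      rw [hr0, hΦa]
      simp only [hRdef]
      simp
    | succ i ih =>
      intro hi1
      have hi : i ≤ n := Nat.le_of_succ_le hi1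
      have hIH := ih hi
      have hri := hrmem i hi
      have hri1 := hrmem (i+1) hi1
      have hle : r i ≤ r (i+1) := hrmono i (i+1) (Nat.le_succ i)
      set Δ : ℝ := Φ (r (i+1)) - Φ (r i) with hΔdef
      have hΔeq : Δ = ∫ τ in (r i)..(r (i+1)), φ τ := by
        have := intervalIntegral.integral_add_adjacent_intervals
          (hφI a (r i) le_rfl hri.1 hri.2) (hφI (r i) (r (i+1)) hri.1 hle hri1.2)
        simp only [hΔdef, hΦdef]
        linarith
      have hΔ0 : 0 ≤ Δ := by
        rw [hΔeq]
        exact intervalIntegral.integral_nonneg hle (fun τ _ => hφ0 τ)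
      have hΔη : Δ < η := by
        have hdist : dist (r (i+1)) (r i) < δ := by
          have : r (i+1) - r i = (b - a)/n := by simp only [hrdef]; push_cast; ring
          rw [Real.dist_eq, this, abs_of_nonneg hmesh0]
          exact hmesh
        have := hδ (r (i+1)) hri1 (r i) hri hdist
        rw [Real.dist_eq] at this
        calc Δ ≤ |Δ| := le_abs_self Δ
        _ = |Φ (r (i+1)) - Φ (r i)| := by rw [hΔdef]
        _ < η := this
      -- main step inequality
      have hstep : R (r (i+1)) ≤ R (r i) + Δ * R (r (i+1)) := by
        have hsplit : R (r (i+1)) - R (r i) = ∫ τ in (r i)..(r (i+1)), φ τ * z τ := by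
          have := intervalIntegral.integral_add_adjacent_intervals
            (hφzI a (r i) le_rfl hri.1 hri.2) (hφzI (r i) (r (i+1)) hri.1 hle hri1.2)
          simp only [hRdef]
          linarith
        have hbound : ∫ τ in (r i)..(r (i+1)), φ τ * z τ
            ≤ ∫ τ in (r i)..(r (i+1)), φ τ * R (r (i+1)) := by
          apply intervalIntegral.integral_mono_on hle
            (hφzI (r i) (r (i+1)) hri.1 hle hri1.2)
            ((hφI (r i) (r (i+1)) hri.1 hle hri1.2).mul_const _)
          intro τ hτ
          have hτmem : τ ∈ Set.Icc a b := ⟨hri.1.trans hτ.1, hτ.2.trans hri1.2⟩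
          have h1 : z τ ≤ R τ := h τ hτmem
          have h2 : R τ ≤ R (r (i+1)) := hRmono τ (r (i+1)) hτmem.1 hτ.2 hri1.2
          exact mul_le_mul_of_nonneg_left (h1.trans h2) (hφ0 τ)
        have hconst : ∫ τ in (r i)..(r (i+1)), φ τ * R (r (i+1)) = Δ * R (r (i+1)) := by
          rw [intervalIntegral.integral_mul_const, hΔeq]
        linarith
      have hR1pos : 0 ≤ R (r (i+1)) := le_trans hc (hRc _ hri1.1 hri1.2)
      have hR0pos : 0 ≤ R (r i) := le_trans hc (hRc _ hri.1 hri.2)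
      have h1Δ : 0 < 1 - Δ := by linarith
      -- R(r(i+1)) ≤ R(r i) * (1 + lam * Δ)
      have hkey2 : R (r (i+1)) ≤ R (r i) * (1 + lam * Δ) := by
        have hfact : 1 ≤ (1 + lam * Δ) * (1 - Δ) := by
          have hlamη : lam * η = lam - 1 := by
            simp only [hηdef]; field_simp
          have : lam - 1 - lam * Δ ≥ 0 := by nlinarith [hΔη]
          nlinarith [hΔ0]
        have h2 : R (r (i+1)) * (1 - Δ) ≤ R (r i) := by nlinarith
        nlinarith
      have hexp : 1 + lam * Δ ≤ Real.exp (lam * Δ) := by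
        have := Real.add_one_le_exp (lam * Δ)
        linarith
      calc R (r (i+1)) ≤ R (r i) * (1 + lam * Δ) := hkey2
      _ ≤ (c * Real.exp (lam * Φ (r i))) * (1 + lam * Δ) := by
          apply mul_le_mul_of_nonneg_right hIH
          have : 0 ≤ lam * Δ := mul_nonneg hlam0.le hΔ0
          linarith
      _ ≤ (c * Real.exp (lam * Φ (r i))) * Real.exp (lam * Δ) := by
          apply mul_le_mul_of_nonneg_left hexp
          positivity
      _ = c * Real.exp (lam * Φ (r (i+1))) := by
          rw [mul_assoc, ← Real.exp_add]
          congr 2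
          simp only [hΔdef]; ring
  have hfinal := key n le_rfl
  rw [hrn] at hfinal
  calc z b ≤ R b := h b ⟨hab, le_rfl⟩
  _ ≤ c * Real.exp (lam * Φ b) := hfinal

lemma my_seq_tendsto {q : ℝ} (hq0 : 0 ≤ q) (hq1 : q < 1) {a c : ℕ → ℝ}
    (ha0 : ∀ n, 0 ≤ a n) (hrec : ∀ n, a (n + 1) ≤ q * a n + c n)
    (hc : Tendsto c atTop (nhds 0)) : Tendsto a atTop (nhds 0) := by
  rw [Metric.tendsto_atTop]
  intro ε hε
  have hq1' : 0 < 1 - q := by linarith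
  set ε' : ℝ := ε * (1 - q) / 2 with hε'def
  have hε' : 0 < ε' := by positivity
  obtain ⟨N₁, hN₁⟩ := (Metric.tendsto_atTop.mp hc) ε' hε'
  have hcb : ∀ n ≥ N₁, c n ≤ ε' := by
    intro n hn
    have := hN₁ n hn
    rw [Real.dist_eq, sub_zero] at this
    exact (le_abs_self _).trans this.le
  have claim : ∀ k : ℕ, a (N₁ + k) ≤ q ^ k * a N₁ + ε / 2 := by
    intro k
    induction k with
    | zero => simp; linarith [ha0 N₁, hε.le]
    | succ k ih =>
      have h1 : a (N₁ + (k + 1)) ≤ q * a (N₁ + k) + c (N₁ + k) := by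
        have := hrec (N₁ + k)
        have he : N₁ + (k + 1) = N₁ + k + 1 := by omega
        rw [he]
        exact this
      have h2 : c (N₁ + k) ≤ ε' := hcb _ (Nat.le_add_right _ _)
      have h3 : q * a (N₁ + k) ≤ q * (q ^ k * a N₁ + ε / 2) :=
        mul_le_mul_of_nonneg_left ih hq0
      have : q * (q ^ k * a N₁ + ε / 2) + ε' ≤ q ^ (k + 1) * a N₁ + ε / 2 := by
        rw [hε'def]; ring_nf; nlinarith
      linarith
  have hpow : Tendsto (fun k : ℕ => q ^ k * a N₁) atTop (nhds 0) := by
    have := tendsto_pow_atTop_nhds_zero_of_lt_one hq0 hq1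
    simpa using this.mul_const (a N₁)
  obtain ⟨k₀, hk₀⟩ := (Metric.tendsto_atTop.mp hpow) (ε / 2) (by linarith)
  refine ⟨N₁ + k₀, fun n hn => ?_⟩
  have hk : n - N₁ ≥ k₀ := by omega
  have hn' : n = N₁ + (n - N₁) := by omega
  have h1 : a n ≤ q ^ (n - N₁) * a N₁ + ε / 2 := by
    conv_lhs => rw [hn']
    exact claim _
  have h2 : q ^ (n - N₁) * a N₁ < ε / 2 := by
    have := hk₀ (n - N₁) hk
    rw [Real.dist_eq, sub_zero] at this
    exact (le_abs_self _).trans_lt this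
  rw [Real.dist_eq, sub_zero, abs_of_nonneg (ha0 n)]
  linarith


/-- Specialization of the generalized Gronwall lemma: if `α(t) = K − φ(t)` with `K > 0`,
`φ ≥ 0` locally integrable with time averages eventually strictly below `K` in limsup,
and `β ≥ 0` locally integrable with time averages tending to 0, then any nonnegative
absolutely continuous `y` with `y' + (K − φ)y ≤ β` a.e. tends to zero. -/
theorem gronwall_constant_minus_fluctuation
    (T K : ℝ) (hT : 0 < T) (hK : 0 < K)
    (φ β : ℝ → ℝ)
    (hφ_nonneg : ∀ t, 0 ≤ φ t)
    (hφ_loc : LocallyIntegrableOn φ (Set.Ioi 0))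
    (hβ_nonneg : ∀ t, 0 ≤ β t)
    (hβ_loc : LocallyIntegrableOn β (Set.Ioi 0))
    (hφ_bdd : IsBoundedUnder (· ≤ ·) atTop (fun t => (1 / T) * ∫ τ in t..(t + T), φ τ))
    (hφ_mean : limsup (fun t => (1 / T) * ∫ τ in t..(t + T), φ τ) atTop < K)
    (hβ_mean : Tendsto (fun t => (1 / T) * ∫ τ in t..(t + T), β τ) atTop (nhds 0))
    (y y' : ℝ → ℝ)
    (hy_nonneg : ∀ t, 0 < t → 0 ≤ y t)
    (hy_int : ∀ s t, 0 < s → s ≤ t → IntervalIntegrable y' volume s t)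
    (hy_ac : ∀ s t, 0 < s → s ≤ t → y t - y s = ∫ τ in s..t, y' τ)
    (hineq : ∀ᵐ t ∂volume, t ∈ Set.Ioi (0:ℝ) → y' t + (K - φ t) * y t ≤ β t) :
    Tendsto y atTop (nhds 0) := by
  -- continuity of y on compact subintervals of (0, ∞)
  have hycont : ∀ s t : ℝ, 0 < s → s ≤ t → ContinuousOn y (Set.Icc s t) := by
    intro s t hs hst
    have hint : IntegrableOn y' (Set.uIcc s t) volume := by
      rw [Set.uIcc_of_le hst]
      exact (intervalIntegrable_iff_integrableOn_Icc_of_le hst).mp (hy_int s t hs hst)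
    have hprim := intervalIntegral.continuousOn_primitive_interval hint
    rw [Set.uIcc_of_le hst] at hprim
    have : ContinuousOn (fun r => y s + ∫ τ in s..r, y' τ) (Set.Icc s t) :=
      continuousOn_const.add hprim
    apply this.congr
    intro r hr
    have := hy_ac s r hs hr.1
    dsimp only
    linarith
  -- integrability of φ and β on compact subintervals of (0, ∞)
  have hφInt : ∀ s t : ℝ, 0 < s → s ≤ t → IntegrableOn φ (Set.Icc s t) volume := by
    intro s t hs hst
    exact hφ_loc.integrableOn_compact_subset
      (fun x hx => lt_of_lt_of_le hs hx.1) isCompact_Icc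
  have hβInt : ∀ s t : ℝ, 0 < s → s ≤ t → IntegrableOn β (Set.Icc s t) volume := by
    intro s t hs hst
    exact hβ_loc.integrableOn_compact_subset
      (fun x hx => lt_of_lt_of_le hs hx.1) isCompact_Icc
  -- the basic differential-to-integral inequality
  have hZineq : ∀ s r : ℝ, 0 < s → s ≤ r →
      y r * Real.exp (K * r) - y s * Real.exp (K * s)
        ≤ (∫ τ in s..r, β τ * Real.exp (K * τ))
          + ∫ τ in s..r, φ τ * (y τ * Real.exp (K * τ)) := by
    intro s r hs hsr
    have hEc : Continuous (fun τ : ℝ => Real.exp (K * τ)) :=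
      Real.continuous_exp.comp (continuous_const.mul continuous_id)
    have huIcc : Set.uIcc s r = Set.Icc s r := Set.uIcc_of_le hsr
    have hyc := hycont s r hs hsr
    have hprod := my_prod_rule (K := K) hsr (hy_int s r hs hsr) hyc
      (fun t ht => hy_ac s t hs ht.1)
    have hf_int : IntervalIntegrable (fun τ => (y' τ + K * y τ) * Real.exp (K * τ)) volume s r := by
      apply IntervalIntegrable.mul_continuousOn _ (by rw [huIcc]; exact hEc.continuousOn)
      apply (hy_int s r hs hsr).add
      exact ContinuousOn.intervalIntegrable (by rw [huIcc]; exact continuousOn_const.mul hyc)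
    have hg_int : IntervalIntegrable (fun τ => (β τ + φ τ * y τ) * Real.exp (K * τ)) volume s r := by
      rw [intervalIntegrable_iff_integrableOn_Icc_of_le hsr]
      apply MeasureTheory.IntegrableOn.mul_continuousOn _ hEc.continuousOn isCompact_Icc
      exact (hβInt s r hs hsr).add ((hφInt s r hs hsr).mul_continuousOn hyc isCompact_Icc)
    have hmono : (∫ τ in s..r, (y' τ + K * y τ) * Real.exp (K * τ))
        ≤ ∫ τ in s..r, (β τ + φ τ * y τ) * Real.exp (K * τ) := by
      apply intervalIntegral.integral_mono_ae_restrict hsr hf_int hg_int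
      have h1 : ∀ᵐ τ ∂(volume.restrict (Set.Icc s r)),
          τ ∈ Set.Ioi (0:ℝ) → y' τ + (K - φ τ) * y τ ≤ β τ := ae_restrict_of_ae hineq
      have h2 : ∀ᵐ τ ∂(volume.restrict (Set.Icc s r)), τ ∈ Set.Icc s r :=
        ae_restrict_mem measurableSet_Icc
      filter_upwards [h1, h2] with τ ha hb
      have hτ0 : τ ∈ Set.Ioi (0:ℝ) := lt_of_lt_of_le hs hb.1
      have hab := ha hτ0
      have hE0 : (0:ℝ) ≤ Real.exp (K * τ) := (Real.exp_pos _).le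
      exact mul_le_mul_of_nonneg_right (by linarith) hE0
    have hsplit : ∫ τ in s..r, (β τ + φ τ * y τ) * Real.exp (K * τ)
        = (∫ τ in s..r, β τ * Real.exp (K * τ))
          + ∫ τ in s..r, φ τ * (y τ * Real.exp (K * τ)) := by
      rw [← intervalIntegral.integral_add]
      · apply intervalIntegral.integral_congr; intro τ _; dsimp only; ring
      · rw [intervalIntegrable_iff_integrableOn_Icc_of_le hsr]
        exact (hβInt s r hs hsr).mul_continuousOn hEc.continuousOn isCompact_Icc
      · rw [intervalIntegrable_iff_integrableOn_Icc_of_le hsr]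
        exact (hφInt s r hs hsr).mul_continuousOn (hyc.mul hEc.continuousOn) isCompact_Icc
    rw [hprod, ← hsplit]
    exact hmono
    -- choice of constants
  set L := limsup (fun t => (1 / T) * ∫ τ in t..(t + T), φ τ) atTop with hLdef
  have hmaxK : max L 0 < K := max_lt hφ_mean hK
  set m : ℝ := (max L 0 + K) / 2 with hmdef
  have hm0 : 0 < m := by
    have h0 : (0:ℝ) ≤ max L 0 := le_max_right _ _
    simp only [hmdef]; linarith
  have hmK : m < K := by simp only [hmdef]; linarith
  have hLm : L < m := lt_of_le_of_lt (le_max_left L 0) (by simp only [hmdef]; linarith)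
  set lam : ℝ := (m + K) / (2 * m) with hlamdef
  have hlam1 : 1 < lam := by
    rw [hlamdef, lt_div_iff₀ (by linarith)]
    linarith
  have hlamm : lam * m = (m + K) / 2 := by
    rw [hlamdef]; field_simp
  have hlammK : lam * m < K := by rw [hlamm]; linarith
  -- eventual bound on φ averages
  have hev : ∀ᶠ s in atTop, (1 / T) * ∫ τ in s..(s + T), φ τ < m :=
    eventually_lt_of_limsup_lt hLm hφ_bdd
  obtain ⟨t₀, ht₀⟩ := eventually_atTop.mp hev
  set t₁ : ℝ := max t₀ 1 with ht₁def
  have ht₁1 : (1:ℝ) ≤ t₁ := le_max_right _ _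
  have ht₁0 : (0:ℝ) < t₁ := lt_of_lt_of_le one_pos ht₁1
  have hΦw : ∀ s, t₁ ≤ s → ∫ τ in s..(s + T), φ τ ≤ m * T := by
    intro s hs
    have := ht₀ s (le_trans (le_max_left _ _) hs)
    have h3 := mul_lt_mul_of_pos_left this hT
    have h4 : T * ((1 / T) * ∫ τ in s..(s + T), φ τ) = ∫ τ in s..(s + T), φ τ := by
      field_simp
    rw [h4] at h3
    linarith
  set δ : ℝ → ℝ := fun s => ∫ τ in s..(s + T), β τ with hδdef
  have hδnn : ∀ s, 0 ≤ δ s := fun s =>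
    intervalIntegral.integral_nonneg (by linarith) (fun τ _ => hβ_nonneg τ)
  have hδtend : Tendsto δ atTop (nhds 0) := by
    have h := hβ_mean.const_mul T
    rw [mul_zero] at h
    refine h.congr (fun s => ?_)
    simp only [hδdef]
    field_simp
  -- abbreviations
  set D : ℝ := Real.exp (lam * (m * T)) with hDdef
  have hD0 : 0 < D := Real.exp_pos _
  set q : ℝ := Real.exp (lam * (m * T) - K * T) with hqdef
  have hq0 : 0 < q := Real.exp_pos _
  have hq1 : q < 1 := by
    rw [hqdef]
    apply Real.exp_lt_one_iff.mpr
    nlinarith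
  -- the window estimate
  have hwin : ∀ s, t₁ ≤ s → ∀ r ∈ Set.Icc s (s + T),
      y r * Real.exp (K * r)
        ≤ (y s * Real.exp (K * s) + Real.exp (K * (s + T)) * δ s) * D := by
    intro s hs r hr
    have hs0 : (0:ℝ) < s := lt_of_lt_of_le ht₁0 hs
    have hsT : s ≤ s + T := by linarith
    have hEc : Continuous (fun τ : ℝ => Real.exp (K * τ)) :=
      Real.continuous_exp.comp (continuous_const.mul continuous_id)
    have hβE : IntegrableOn (fun τ => β τ * Real.exp (K * τ)) (Set.Icc s (s + T)) volume :=
      (hβInt s (s + T) hs0 hsT).mul_continuousOn hEc.continuousOn isCompact_Icc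
    have hβEI : ∀ u v, s ≤ u → u ≤ v → v ≤ s + T →
        IntervalIntegrable (fun τ => β τ * Real.exp (K * τ)) volume u v := fun u v h1 h2 h3 =>
      (intervalIntegrable_iff_integrableOn_Icc_of_le h2).mpr
        (hβE.mono_set (Set.Icc_subset_Icc h1 h3))
    set c : ℝ := y s * Real.exp (K * s) + ∫ τ in s..(s + T), β τ * Real.exp (K * τ) with hcdef
    have hBnn : 0 ≤ ∫ τ in s..(s + T), β τ * Real.exp (K * τ) :=
      intervalIntegral.integral_nonneg hsT
        (fun τ _ => mul_nonneg (hβ_nonneg τ) (Real.exp_pos _).le)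
    have hc0 : 0 ≤ c := by
      have := mul_nonneg (hy_nonneg s hs0) (Real.exp_pos (K * s)).le
      simp only [hcdef]; linarith
    -- the integral inequality hypothesis for the Gronwall lemma on [s, r]
    have hgron : ∀ ρ ∈ Set.Icc s r, y ρ * Real.exp (K * ρ)
        ≤ c + ∫ τ in s..ρ, φ τ * (y τ * Real.exp (K * τ)) := by
      intro ρ hρ
      have h1 := hZineq s ρ hs0 hρ.1
      have h2 : (∫ τ in s..ρ, β τ * Real.exp (K * τ))
          ≤ ∫ τ in s..(s + T), β τ * Real.exp (K * τ) := by
        have hsplit := intervalIntegral.integral_add_adjacent_intervals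
          (hβEI s ρ le_rfl hρ.1 (hρ.2.trans hr.2)) (hβEI ρ (s + T) hρ.1 (hρ.2.trans hr.2) le_rfl)
        have hnn : 0 ≤ ∫ τ in ρ..(s + T), β τ * Real.exp (K * τ) :=
          intervalIntegral.integral_nonneg (hρ.2.trans hr.2)
            (fun τ _ => mul_nonneg (hβ_nonneg τ) (Real.exp_pos _).le)
        linarith
      simp only [hcdef]
      linarith
    -- apply the Gronwall lemma on [s, r]
    have hgr := my_gronwall hr.1 hc0 hlam1 hφ_nonneg
      (hφInt s r hs0 hr.1)
      ((hycont s r hs0 hr.1).mul hEc.continuousOn)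
      (fun ρ hρ => mul_nonneg (hy_nonneg ρ (lt_of_lt_of_le hs0 hρ.1)) (Real.exp_pos _).le)
      hgron
    -- bound the two factors
    have hΦr : ∫ τ in s..r, φ τ ≤ m * T := by
      have hφI : ∀ u v, s ≤ u → u ≤ v → v ≤ s + T →
          IntervalIntegrable φ volume u v := fun u v h1 h2 h3 =>
        (intervalIntegrable_iff_integrableOn_Icc_of_le h2).mpr
          ((hφInt s (s + T) hs0 hsT).mono_set (Set.Icc_subset_Icc h1 h3))
      have hsplit := intervalIntegral.integral_add_adjacent_intervals
        (hφI s r le_rfl hr.1 hr.2) (hφI r (s + T) hr.1 hr.2 le_rfl)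
      have hnn : 0 ≤ ∫ τ in r..(s + T), φ τ :=
        intervalIntegral.integral_nonneg hr.2 (fun τ _ => hφ_nonneg τ)
      have := hΦw s hs
      linarith
    have hexp : Real.exp (lam * ∫ τ in s..r, φ τ) ≤ D := by
      rw [hDdef]
      apply Real.exp_le_exp.mpr
      have hlam0 : 0 < lam := lt_trans one_pos hlam1
      nlinarith
    have hcbound : c ≤ y s * Real.exp (K * s) + Real.exp (K * (s + T)) * δ s := by
      have h3 : (∫ τ in s..(s + T), β τ * Real.exp (K * τ))
          ≤ ∫ τ in s..(s + T), β τ * Real.exp (K * (s + T)) := by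
        apply intervalIntegral.integral_mono_on hsT
          (hβEI s (s + T) le_rfl hsT le_rfl)
          (((intervalIntegrable_iff_integrableOn_Icc_of_le hsT).mpr
            (hβInt s (s + T) hs0 hsT)).mul_const _)
        intro τ hτ
        apply mul_le_mul_of_nonneg_left _ (hβ_nonneg τ)
        apply Real.exp_le_exp.mpr
        nlinarith [hτ.2]
      have h4 : ∫ τ in s..(s + T), β τ * Real.exp (K * (s + T))
          = Real.exp (K * (s + T)) * δ s := by
        rw [intervalIntegral.integral_mul_const]
        simp only [hδdef]; ring
      simp only [hcdef]
      linarith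
    calc y r * Real.exp (K * r) ≤ c * Real.exp (lam * ∫ τ in s..r, φ τ) := hgr
    _ ≤ c * D := mul_le_mul_of_nonneg_left hexp hc0
    _ ≤ (y s * Real.exp (K * s) + Real.exp (K * (s + T)) * δ s) * D :=
        mul_le_mul_of_nonneg_right hcbound hD0.le
    -- intermediate-time bound
  have hmid : ∀ s, t₁ ≤ s → ∀ r ∈ Set.Icc s (s + T),
      y r ≤ (y s + Real.exp (K * T) * δ s) * D := by
    intro s hs r hr
    have hs0 : (0:ℝ) < s := lt_of_lt_of_le ht₁0 hs
    have hr0 : (0:ℝ) < r := lt_of_lt_of_le hs0 hr.1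
    have h1 := hwin s hs r hr
    have hEs : (0:ℝ) < Real.exp (K * s) := Real.exp_pos _
    have hEr : Real.exp (K * s) ≤ Real.exp (K * r) := by
      apply Real.exp_le_exp.mpr
      nlinarith [hr.1]
    have h2 : y r * Real.exp (K * s) ≤ y r * Real.exp (K * r) :=
      mul_le_mul_of_nonneg_left hEr (hy_nonneg r hr0)
    have h3 : (y s * Real.exp (K * s) + Real.exp (K * (s + T)) * δ s) * D
        = ((y s + Real.exp (K * T) * δ s) * D) * Real.exp (K * s) := by
      have hEadd : Real.exp (K * (s + T)) = Real.exp (K * s) * Real.exp (K * T) := by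
        rw [← Real.exp_add]; congr 1; ring
      rw [hEadd]; ring
    have h4 : y r * Real.exp (K * s) ≤ ((y s + Real.exp (K * T) * δ s) * D) * Real.exp (K * s) := by
      rw [← h3]; exact h2.trans h1
    exact (mul_le_mul_iff_of_pos_right hEs).mp h4
  -- endpoint contraction
  have hend : ∀ s, t₁ ≤ s → y (s + T) ≤ q * y s + D * δ s := by
    intro s hs
    have hs0 : (0:ℝ) < s := lt_of_lt_of_le ht₁0 hs
    have h1 := hwin s hs (s + T) ⟨by linarith, le_rfl⟩
    have hE : (0:ℝ) < Real.exp (K * (s + T)) := Real.exp_pos _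
    have h3 : (y s * Real.exp (K * s) + Real.exp (K * (s + T)) * δ s) * D
        = (q * y s + D * δ s) * Real.exp (K * (s + T)) := by
      rw [hqdef, hDdef]
      rw [show lam * (m * T) - K * T = lam * (m * T) + (-(K * T)) by ring, Real.exp_add]
      have e1 : Real.exp (K * s) = Real.exp (K * (s + T)) * Real.exp (-(K * T)) := by
        rw [← Real.exp_add]; congr 1; ring
      rw [e1]; ring
    rw [h3] at h1
    exact (mul_le_mul_iff_of_pos_right hE).mp h1
  -- the sequence of window endpoints
  set a : ℕ → ℝ := fun n => y (t₁ + n * T) with hadef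
  set cseq : ℕ → ℝ := fun n => D * δ (t₁ + n * T) with hcseqdef
  have hsn : ∀ n : ℕ, t₁ ≤ t₁ + n * T := by
    intro n
    have : (0:ℝ) ≤ (n:ℝ) * T := mul_nonneg (Nat.cast_nonneg n) hT.le
    linarith
  have ha0 : ∀ n, 0 ≤ a n := fun n =>
    hy_nonneg _ (lt_of_lt_of_le ht₁0 (hsn n))
  have hrec : ∀ n, a (n + 1) ≤ q * a n + cseq n := by
    intro n
    have h1 := hend (t₁ + n * T) (hsn n)
    have he : t₁ + (↑(n + 1) : ℝ) * T = (t₁ + n * T) + T := by push_cast; ring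
    simp only [hadef, hcseqdef]
    rw [he]
    exact h1
  have htendn : Tendsto (fun n : ℕ => t₁ + (n : ℝ) * T) atTop atTop :=
    tendsto_atTop_add_const_left _ t₁ (tendsto_natCast_atTop_atTop.atTop_mul_const hT)
  have hδn : Tendsto (fun n : ℕ => δ (t₁ + (n : ℝ) * T)) atTop (nhds 0) :=
    hδtend.comp htendn
  have hcseq : Tendsto cseq atTop (nhds 0) := by
    have := hδn.const_mul D
    rw [mul_zero] at this
    exact this
  have hatend : Tendsto a atTop (nhds 0) := my_seq_tendsto hq0.le hq1 ha0 hrec hcseq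
  -- final ε-argument
  rw [Metric.tendsto_atTop]
  intro ε hε
  have hDKT : (0:ℝ) < D * Real.exp (K * T) := by positivity
  obtain ⟨N₂, hN₂⟩ := (Metric.tendsto_atTop.mp hatend) (ε / (2 * D)) (by positivity)
  obtain ⟨N₃, hN₃⟩ := (Metric.tendsto_atTop.mp hδn) (ε / (2 * (D * Real.exp (K * T))))
    (by positivity)
  set N : ℕ := max N₂ N₃ with hNdef
  refine ⟨t₁ + N * T + 1, fun t ht => ?_⟩
  have htt₁ : t₁ ≤ t := by
    have : (0:ℝ) ≤ (N:ℝ) * T := mul_nonneg (Nat.cast_nonneg N) hT.le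
    linarith
  have ht0 : (0:ℝ) < t := lt_of_lt_of_le ht₁0 htt₁
  set n : ℕ := ⌊(t - t₁) / T⌋₊ with hndef
  have hnn : (0:ℝ) ≤ (t - t₁) / T := div_nonneg (by linarith) hT.le
  have hnN : N ≤ n := by
    apply Nat.le_floor
    rw [le_div_iff₀ hT]
    linarith
  have hs1 : t₁ + n * T ≤ t := by
    have h1 : (n : ℝ) ≤ (t - t₁) / T := Nat.floor_le hnn
    rw [le_div_iff₀ hT] at h1
    linarith
  have hs2 : t ≤ t₁ + n * T + T := by
    have h1 : (t - t₁) / T < n + 1 := Nat.lt_floor_add_one _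
    rw [div_lt_iff₀ hT] at h1
    linarith
  have hbound : y t ≤ (a n + Real.exp (K * T) * δ (t₁ + n * T)) * D := by
    have := hmid (t₁ + n * T) (hsn n) t ⟨hs1, by linarith⟩
    simpa [hadef] using this
  have hb1 : D * a n < ε / 2 := by
    have h := hN₂ n (le_trans (le_max_left _ _) hnN)
    rw [Real.dist_eq, sub_zero, abs_of_nonneg (ha0 n)] at h
    have h2 := mul_lt_mul_of_pos_left h hD0
    have h3 : D * (ε / (2 * D)) = ε / 2 := by field_simp
    rw [h3] at h2
    exact h2
  have hb2 : D * (Real.exp (K * T) * δ (t₁ + n * T)) < ε / 2 := by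
    have h := hN₃ n (le_trans (le_max_right _ _) hnN)
    rw [Real.dist_eq, sub_zero, abs_of_nonneg (hδnn _)] at h
    have h2 := mul_lt_mul_of_pos_left h hDKT
    have h3 : D * Real.exp (K * T) * (ε / (2 * (D * Real.exp (K * T)))) = ε / 2 := by
      field_simp
    rw [h3] at h2
    calc D * (Real.exp (K * T) * δ (t₁ + n * T))
        = D * Real.exp (K * T) * δ (t₁ + n * T) := by ring
    _ < ε / 2 := h2
  rw [Real.dist_eq, sub_zero, abs_of_nonneg (hy_nonneg t ht0)]
  calc y t ≤ (a n + Real.exp (K * T) * δ (t₁ + n * T)) * D := hbound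
  _ = D * a n + D * (Real.exp (K * T) * δ (t₁ + n * T)) := by ring
  _ < ε / 2 + ε / 2 := by linarith
  _ = ε := by ring
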